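/- arXiv:0807.2982 — 2 statements merged into one kernel-verified Lean document; each statement's English description precedes it below -/
import Mathlib

section
/- Let H be a complex Hilbert space and let A ⊆ B(H) be a unital C*-subalgebra possessing a weak expectation, i.e., there exists a completely contractive linear map Φ : B(H) → B(H) with Φ(a) = a for all a ∈ A whose range is contained in the double commutant A''. Then every minimal A-projection E on B(H) satisfies E(A'') = range(E). -/
set_option maxHeartbeats 1000000
set_option synthInstance.maxHeartbeats 400000
set_option linter.unusedSectionVars false
set_option linter.unusedVariables false

variable {H : Type*} [NormedAddCommGroup H] [InnerProductSpace ℂ H] [CompleteSpace H]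

/-- The bounded operator on the Hilbert space `H ⊕ ⋯ ⊕ H` (with its ℓ²-norm)
induced by an `n × n` matrix of bounded operators on `H`. -/
noncomputable def matOp {H : Type*} [NormedAddCommGroup H] [InnerProductSpace ℂ H]
    {n : ℕ} (A : Matrix (Fin n) (Fin n) (H →L[ℂ] H)) :
    PiLp 2 (fun _ : Fin n => H) →L[ℂ] PiLp 2 (fun _ : Fin n => H) :=
  ((PiLp.continuousLinearEquiv 2 ℂ (fun _ : Fin n => H)).symm.toContinuousLinearMap.comp
      (ContinuousLinearMap.pi fun i => ∑ j, (A i j).comp (ContinuousLinearMap.proj j))).comp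
    (PiLp.continuousLinearEquiv 2 ℂ (fun _ : Fin n => H)).toContinuousLinearMap

/-- A linear map on `B(H)` is completely contractive if all of its matrix amplifications
are contractive with respect to the C*-norms on `Mₙ(B(H)) ≅ B(H ⊕ ⋯ ⊕ H)`. -/
def FullCC {H : Type*} [NormedAddCommGroup H] [InnerProductSpace ℂ H]
    (φ : (H →L[ℂ] H) →ₗ[ℂ] (H →L[ℂ] H)) : Prop :=
  ∀ (n : ℕ) (A : Matrix (Fin n) (Fin n) (H →L[ℂ] H)), ‖matOp (A.map φ)‖ ≤ ‖matOp A‖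

/-- An `S`-map: a completely contractive linear map of `B(H)` fixing `S` pointwise. -/
def IsSMap {H : Type*} [NormedAddCommGroup H] [InnerProductSpace ℂ H]
    (S : Set (H →L[ℂ] H)) (φ : (H →L[ℂ] H) →ₗ[ℂ] (H →L[ℂ] H)) : Prop :=
  FullCC φ ∧ ∀ s ∈ S, φ s = s

/-- A minimal `S`-projection: an idempotent `S`-map whose seminorm `T ↦ ‖E T‖`
is minimal among the seminorms of all `S`-maps. -/
def IsMinimalSProj {H : Type*} [NormedAddCommGroup H] [InnerProductSpace ℂ H]
    (S : Set (H →L[ℂ] H)) (E : (H →L[ℂ] H) →ₗ[ℂ] (H →L[ℂ] H)) : Prop :=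
  IsSMap S E ∧ E ∘ₗ E = E ∧
    ∀ ψ : (H →L[ℂ] H) →ₗ[ℂ] (H →L[ℂ] H), IsSMap S ψ →
      (∀ T, ‖ψ T‖ ≤ ‖E T‖) → ∀ T, ‖ψ T‖ = ‖E T‖

section Aux

omit [CompleteSpace H]

lemma matOp_apply {n : ℕ} (A : Matrix (Fin n) (Fin n) (H →L[ℂ] H))
    (x : PiLp 2 fun _ : Fin n => H) (i : Fin n) :
    matOp A x i = ∑ j, A i j (x j) := by
  simp [matOp]

lemma piLp_one_norm (x : PiLp 2 fun _ : Fin 1 => H) : ‖x‖ = ‖x 0‖ := by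
  rw [PiLp.norm_eq_of_L2]
  simp [Real.sqrt_sq (norm_nonneg _)]

lemma norm_matOp_one (B : Matrix (Fin 1) (Fin 1) (H →L[ℂ] H)) : ‖matOp B‖ = ‖B 0 0‖ := by
  apply le_antisymm
  · apply ContinuousLinearMap.opNorm_le_bound _ (norm_nonneg _)
    intro x
    rw [piLp_one_norm, piLp_one_norm, matOp_apply]
    simpa using (B 0 0).le_opNorm (x 0)
  · refine ContinuousLinearMap.opNorm_le_bound _ (ContinuousLinearMap.opNorm_nonneg _)
      fun y => ?_
    let x : PiLp 2 fun _ : Fin 1 => H := WithLp.toLp 2 (fun _ => y)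
    have h1 : ‖x‖ = ‖y‖ := by rw [piLp_one_norm]
    have h2 : B 0 0 y = matOp B x 0 := by rw [matOp_apply]; simp [x]
    calc ‖B 0 0 y‖ = ‖matOp B x 0‖ := by rw [h2]
    _ = ‖matOp B x‖ := (piLp_one_norm _).symm
    _ ≤ ‖matOp B‖ * ‖x‖ := (matOp B).le_opNorm x
    _ = ‖matOp B‖ * ‖y‖ := by rw [h1]

lemma FullCC.norm_le {φ : (H →L[ℂ] H) →ₗ[ℂ] (H →L[ℂ] H)} (h : FullCC φ) (T : H →L[ℂ] H) :
    ‖φ T‖ ≤ ‖T‖ := by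
  have := h 1 (Matrix.of fun _ _ => T)
  rwa [norm_matOp_one, norm_matOp_one] at this

lemma FullCC.comp {φ ψ : (H →L[ℂ] H) →ₗ[ℂ] (H →L[ℂ] H)} (hφ : FullCC φ) (hψ : FullCC ψ) :
    FullCC (ψ ∘ₗ φ) := by
  intro n A
  have h : A.map (ψ ∘ₗ φ) = (A.map φ).map ψ := by
    ext i j; simp [Matrix.map_apply]
  rw [h]
  exact (hψ n (A.map φ)).trans (hφ n A)

lemma matOp_smul {n : ℕ} (c : ℂ) (A : Matrix (Fin n) (Fin n) (H →L[ℂ] H)) :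
    matOp (c • A) = c • matOp A := by
  refine ContinuousLinearMap.ext fun x => ?_
  refine PiLp.ext fun i => ?_
  simp [matOp_apply, Finset.smul_sum]

lemma matOp_add {n : ℕ} (A B : Matrix (Fin n) (Fin n) (H →L[ℂ] H)) :
    matOp (A + B) = matOp A + matOp B := by
  refine ContinuousLinearMap.ext fun x => ?_
  refine PiLp.ext fun i => ?_
  have h : (matOp A + matOp B) x i = matOp A x i + matOp B x i := rfl
  rw [h]
  simp [matOp_apply, Finset.sum_add_distrib]

lemma matOp_zero {n : ℕ} :
    matOp (0 : Matrix (Fin n) (Fin n) (H →L[ℂ] H)) = 0 := by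
  refine ContinuousLinearMap.ext fun x => ?_
  refine PiLp.ext fun i => ?_
  have h : (0 : PiLp 2 (fun _ : Fin n => H) →L[ℂ] PiLp 2 (fun _ : Fin n => H)) x i = 0 := rfl
  rw [h]
  simp [matOp_apply]

lemma matOp_sum {n : ℕ} {ι : Type*} (s : Finset ι)
    (F : ι → Matrix (Fin n) (Fin n) (H →L[ℂ] H)) :
    matOp (∑ k ∈ s, F k) = ∑ k ∈ s, matOp (F k) := by
  classical
  induction s using Finset.cons_induction with
  | empty => simpa using matOp_zero
  | cons a s ha ih => rw [Finset.sum_cons, Finset.sum_cons, matOp_add, ih]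

lemma FullCC.avg (m : ℕ) (hm : 1 ≤ m) (F : ℕ → ((H →L[ℂ] H) →ₗ[ℂ] (H →L[ℂ] H)))
    (hF : ∀ k, FullCC (F k)) :
    FullCC (((m : ℂ))⁻¹ • ∑ k ∈ Finset.range m, F k) := by
  intro n A
  have hmap : A.map (((m : ℂ))⁻¹ • ∑ k ∈ Finset.range m, F k)
      = ((m : ℂ))⁻¹ • ∑ k ∈ Finset.range m, A.map (F k) := by
    ext i j
    simp [Matrix.map_apply, Matrix.sum_apply, LinearMap.sum_apply]
  rw [hmap, matOp_smul, matOp_sum]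
  have h1 : ‖(m : ℂ)⁻¹ • ∑ k ∈ Finset.range m, matOp (A.map (F k))‖
      ≤ (m : ℝ)⁻¹ * ∑ k ∈ Finset.range m, ‖matOp (A.map (F k))‖ := by
    calc ‖(m : ℂ)⁻¹ • ∑ k ∈ Finset.range m, matOp (A.map (F k))‖
        ≤ ‖((m : ℂ))⁻¹‖ * ‖∑ k ∈ Finset.range m, matOp (A.map (F k))‖ :=
          ContinuousLinearMap.opNorm_smul_le _ _
      _ = (m : ℝ)⁻¹ * ‖∑ k ∈ Finset.range m, matOp (A.map (F k))‖ := by norm_num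
      _ ≤ (m : ℝ)⁻¹ * ∑ k ∈ Finset.range m, ‖matOp (A.map (F k))‖ := by
          have h := norm_sum_le (Finset.range m) (fun k => matOp (A.map (F k)))
          have hm0 : (0:ℝ) ≤ (m : ℝ)⁻¹ := by positivity
          exact mul_le_mul_of_nonneg_left h hm0
  refine h1.trans ?_
  have h2 : ∑ k ∈ Finset.range m, ‖matOp (A.map (F k))‖ ≤ m * ‖matOp A‖ := by
    calc ∑ k ∈ Finset.range m, ‖matOp (A.map (F k))‖
        ≤ ∑ _k ∈ Finset.range m, ‖matOp A‖ := Finset.sum_le_sum fun k _ => hF k n A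
      _ = m * ‖matOp A‖ := by simp [Finset.sum_const]
  calc (m : ℝ)⁻¹ * ∑ k ∈ Finset.range m, ‖matOp (A.map (F k))‖
      ≤ (m : ℝ)⁻¹ * (m * ‖matOp A‖) := by gcongr
    _ = ‖matOp A‖ := by
        rw [← mul_assoc, inv_mul_cancel₀ (by exact_mod_cast Nat.one_le_iff_ne_zero.mp hm),
          one_mul]

/-- Rigidity of a minimal `S`-projection: it absorbs any `S`-map. -/
lemma key_rigidity (S : Set (H →L[ℂ] H))
    (Φ E : (H →L[ℂ] H) →ₗ[ℂ] (H →L[ℂ] H))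
    (hΦ : IsSMap S Φ) (hE : IsMinimalSProj S E) (T : H →L[ℂ] H) :
    E (Φ (E T)) = E T := by
  obtain ⟨⟨hEcc, hEfix⟩, hEE, hmin⟩ := hE
  obtain ⟨hΦcc, hΦfix⟩ := hΦ
  set G : (H →L[ℂ] H) →ₗ[ℂ] (H →L[ℂ] H) := E ∘ₗ (Φ ∘ₗ E) with hGdef
  have hEid : ∀ T, E (E T) = E T := fun T => by
    have := DFunLike.congr_fun hEE T
    simpa using this
  have hGapp : ∀ T, G T = E (Φ (E T)) := fun T => rfl
  have hEG : ∀ T, E (G T) = G T := fun T => by rw [hGapp, hEid]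
  have hGcc : FullCC G := (hEcc.comp hΦcc).comp hEcc
  have hGfix : ∀ a ∈ S, G a = a := fun a ha => by
    rw [hGapp, hEfix a ha, hΦfix a ha, hEfix a ha]
  have hGle : ∀ T, ‖G T‖ ≤ ‖E T‖ := fun T => by
    rw [hGapp]
    calc ‖E (Φ (E T))‖ ≤ ‖Φ (E T)‖ := hEcc.norm_le _
      _ ≤ ‖E T‖ := hΦcc.norm_le _
  -- facts about powers of G (as an endomorphism)
  have hmul : ∀ (f g : (H →L[ℂ] H) →ₗ[ℂ] (H →L[ℂ] H)) (T), (f * g) T = f (g T) :=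
    fun f g T => rfl
  have hpow_cc : ∀ k : ℕ, FullCC (G ^ (k + 1)) := by
    intro k
    induction k with
    | zero => simpa [pow_one] using hGcc
    | succ k ih =>
      have : G ^ (k + 2) = (G ^ (k + 1)) ∘ₗ G := by
        rw [pow_succ]; rfl
      rw [this]
      exact hGcc.comp ih
  have hpow_fix : ∀ k : ℕ, ∀ a ∈ S, (G ^ (k + 1)) a = a := by
    intro k
    induction k with
    | zero => simpa [pow_one] using hGfix
    | succ k ih =>
      intro a ha
      rw [pow_succ, hmul, hGfix a ha]
      exact ih a ha
  have hEGpow : ∀ k : ℕ, ∀ T, E ((G ^ (k + 1)) T) = (G ^ (k + 1)) T := by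
    intro k T
    rw [pow_succ', hmul, hEG]
  have hpow_le : ∀ k : ℕ, ∀ T, ‖(G ^ (k + 1)) T‖ ≤ ‖E T‖ := by
    intro k
    induction k with
    | zero => simpa [pow_one] using hGle
    | succ k ih =>
      intro T
      calc ‖(G ^ (k + 2)) T‖ = ‖G ((G ^ (k + 1)) T)‖ := by rw [pow_succ', hmul]
        _ ≤ ‖E ((G ^ (k + 1)) T)‖ := hGle _
        _ = ‖(G ^ (k + 1)) T‖ := by rw [hEGpow]
        _ ≤ ‖E T‖ := ih T
  -- the averaged maps
  have havg : ∀ m : ℕ, 1 ≤ m → ∀ T,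
      ‖(((m : ℂ))⁻¹ • ∑ k ∈ Finset.range m, G ^ (k + 1)) T‖ = ‖E T‖ := by
    intro m hm
    have hmC : (m : ℂ) ≠ 0 := by exact_mod_cast Nat.one_le_iff_ne_zero.mp hm
    refine hmin _ ⟨FullCC.avg m hm _ fun k => hpow_cc k, ?_⟩ ?_
    · intro a ha
      have : ∀ k ∈ Finset.range m, (G ^ (k + 1)) a = a := fun k _ => hpow_fix k a ha
      rw [LinearMap.smul_apply, LinearMap.sum_apply, Finset.sum_congr rfl this,
        Finset.sum_const, Finset.card_range, ← Nat.cast_smul_eq_nsmul ℂ, smul_smul,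
        inv_mul_cancel₀ hmC, one_smul]
    · intro T
      rw [LinearMap.smul_apply, LinearMap.sum_apply]
      calc ‖(m : ℂ)⁻¹ • ∑ k ∈ Finset.range m, (G ^ (k + 1)) T‖
          = (m : ℝ)⁻¹ * ‖∑ k ∈ Finset.range m, (G ^ (k + 1)) T‖ := by
            have h := norm_smul ((m : ℂ)⁻¹) (∑ k ∈ Finset.range m, (G ^ (k + 1)) T)
            rw [h]; norm_num
        _ ≤ (m : ℝ)⁻¹ * ∑ k ∈ Finset.range m, ‖(G ^ (k + 1)) T‖ := by
            have h := norm_sum_le (Finset.range m) (fun k => (G ^ (k + 1)) T)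
            have hm0 : (0:ℝ) ≤ (m : ℝ)⁻¹ := by positivity
            exact mul_le_mul_of_nonneg_left h hm0
        _ ≤ (m : ℝ)⁻¹ * (m * ‖E T‖) := by
            have h2 : ∑ k ∈ Finset.range m, ‖(G ^ (k + 1)) T‖ ≤ m * ‖E T‖ := by
              calc ∑ k ∈ Finset.range m, ‖(G ^ (k + 1)) T‖
                  ≤ ∑ _k ∈ Finset.range m, ‖E T‖ :=
                    Finset.sum_le_sum fun k _ => hpow_le k T
                _ = m * ‖E T‖ := by simp [Finset.sum_const]
            have hm0 : (0:ℝ) ≤ (m : ℝ)⁻¹ := by positivity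
            exact mul_le_mul_of_nonneg_left h2 hm0
        _ = ‖E T‖ := by
            rw [← mul_assoc, inv_mul_cancel₀
              (by exact_mod_cast Nat.one_le_iff_ne_zero.mp hm), one_mul]
  -- main estimate: ‖G T - E T‖ ≤ 2 ‖E T‖ / m
  have hbound : ∀ m : ℕ, 1 ≤ m → ‖G T - E T‖ ≤ 2 * ‖E T‖ / m := by
    intro m hm
    have heq := havg m hm (G T - T)
    have hET' : E (G T - T) = G T - E T := by rw [map_sub, hEG]
    have hψT' : (((m : ℂ))⁻¹ • ∑ k ∈ Finset.range m, G ^ (k + 1)) (G T - T)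
        = ((m : ℂ))⁻¹ • ((G ^ (m + 1)) T - G T) := by
      rw [LinearMap.smul_apply, LinearMap.sum_apply]
      congr 1
      have hterm : ∀ k ∈ Finset.range m,
          (G ^ (k + 1)) (G T - T) = (G ^ (k + 1 + 1)) T - (G ^ (k + 1)) T := by
        intro k _
        have h : (G ^ (k + 1 + 1)) T = (G ^ (k + 1)) (G T) := by rw [pow_succ]; rfl
        rw [map_sub, h]
      rw [Finset.sum_congr rfl hterm]
      have := Finset.sum_range_sub (fun k => (G ^ (k + 1)) T) m
      simpa using this
    rw [hET'] at heq
    rw [hψT'] at heq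
    rw [← heq]
    have hs := norm_smul ((m : ℂ)⁻¹) ((G ^ (m + 1)) T - G T)
    rw [hs]
    have hle : ‖(G ^ (m + 1)) T - G T‖ ≤ 2 * ‖E T‖ := by
      calc ‖(G ^ (m + 1)) T - G T‖ ≤ ‖(G ^ (m + 1)) T‖ + ‖G T‖ := norm_sub_le _ _
        _ ≤ ‖E T‖ + ‖E T‖ := add_le_add (hpow_le m T) (hGle T)
        _ = 2 * ‖E T‖ := by ring
    have hnm : ‖((m : ℂ))⁻¹‖ = (m : ℝ)⁻¹ := by norm_num
    rw [hnm]
    rw [div_eq_inv_mul]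
    have hm0 : (0:ℝ) ≤ (m : ℝ)⁻¹ := by positivity
    exact mul_le_mul_of_nonneg_left hle hm0
  -- conclude G T = E T
  have hzero : G T - E T = 0 := by
    rw [← norm_le_zero_iff]
    have htend : Filter.Tendsto (fun m : ℕ => 2 * ‖E T‖ / m) Filter.atTop (nhds 0) :=
      tendsto_const_div_atTop_nhds_zero_nat _
    refine ge_of_tendsto htend ?_
    filter_upwards [Filter.eventually_ge_atTop 1] with m hm
    exact hbound m hm
  have : G T = E T := by rwa [sub_eq_zero] at hzero
  rw [← hGapp]
  exact this

end Aux

/-- If a unital C*-subalgebra `A ⊆ B(H)` has a weak expectation (a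
completely contractive map `Φ` of `B(H)` fixing `A` whose range lies in the double
commutant `A''`), then every minimal `A`-projection `E` satisfies `E(A'') = range E`. -/
theorem stmt_7 (A : StarSubalgebra ℂ (H →L[ℂ] H)) (hA : IsClosed (A : Set (H →L[ℂ] H)))
    (Φ : (H →L[ℂ] H) →ₗ[ℂ] (H →L[ℂ] H)) (hΦcc : FullCC Φ)
    (hΦfix : ∀ a ∈ A, Φ a = a)
    (hΦrange : ∀ T, Φ T ∈ Set.centralizer (Set.centralizer (A : Set (H →L[ℂ] H))))
    (E : (H →L[ℂ] H) →ₗ[ℂ] (H →L[ℂ] H)) (hE : IsMinimalSProj (A : Set (H →L[ℂ] H)) E) :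
    ⇑E '' Set.centralizer (Set.centralizer (A : Set (H →L[ℂ] H))) = Set.range ⇑E := by
  refine Set.Subset.antisymm (Set.image_subset_range _ _) ?_
  rintro x ⟨T, rfl⟩
  exact ⟨Φ (E T), hΦrange (E T),
    key_rigidity (A : Set (H →L[ℂ] H)) Φ E ⟨hΦcc, fun s hs => hΦfix s hs⟩ hE T⟩
end

section
/- Consider the real C*-algebra L^∞([0,1]) of (equivalence classes of) essentially bounded Lebesgue measurable real-valued functions on [0,1], with C([0,1]) ⊆ L^∞([0,1]) by identifying each continuous function with its equivalence class. Define F_{L^∞}(C([0,1])) = {h ∈ L^∞([0,1]) : φ(h) = h for every linear map φ : L^∞([0,1]) → L^∞([0,1]) that is unital (φ([1]) = [1]), positive (monotone for the almost-everywhere order), and satisfies φ([f]) = [f] for every continuous f : [0,1] → ℝ}. Then h ∈ F_{L^∞}(C([0,1])) if and only if there exists a Riemann integrable function f : [0,1] → ℝ (equivalently, by Lebesgue's criterion, a bounded function whose set of points of discontinuity has Lebesgue measure zero) whose almost-everywhere equivalence class equals h. -/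
open MeasureTheory

/-- Lebesgue measure restricted to the unit interval `[0,1]`. -/
noncomputable def μ01 : Measure ℝ := volume.restrict (Set.Icc (0 : ℝ) 1)

/-- The unit of `L^∞([0,1])`: the class of the constant function `1`. -/
noncomputable def oneLinf : Lp ℝ ⊤ μ01 := (memLp_top_const (1 : ℝ)).toLp _

/-- `f` is Riemann integrable on `[0,1]`: by Lebesgue's criterion, `f` is bounded on
`[0,1]` and its set of points of discontinuity (within `[0,1]`) has Lebesgue measure
zero. -/
def RiemannIntegrableOn01 (f : ℝ → ℝ) : Prop :=
  (∃ C : ℝ, ∀ x ∈ Set.Icc (0 : ℝ) 1, |f x| ≤ C) ∧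
    volume {x ∈ Set.Icc (0 : ℝ) 1 | ¬ ContinuousWithinAt f (Set.Icc (0 : ℝ) 1) x} = 0

open Set Filter
open scoped ENNReal NNReal

section Aux


instance : IsFiniteMeasure μ01 := by
  constructor
  rw [μ01, Measure.restrict_apply_univ]
  simp [Real.volume_Icc]

lemma ae_mem_Icc : ∀ᵐ x ∂μ01, x ∈ Set.Icc (0:ℝ) 1 :=
  ae_restrict_mem measurableSet_Icc

lemma μ01_apply (s : Set ℝ) : μ01 s = volume (s ∩ Set.Icc (0:ℝ) 1) :=
  Measure.restrict_apply' measurableSet_Icc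

/-- every ball around a point of `[0,1]` has positive `μ01`-measure -/
lemma μ01_ball_pos {x r : ℝ} (hx : x ∈ Set.Icc (0:ℝ) 1) (hr : 0 < r) :
    0 < μ01 (Metric.ball x r) := by
  obtain ⟨hx0, hx1⟩ := hx
  set a := max (x - r) 0 with ha
  set b := min (x + r) 1 with hb
  have hab : a < b := by
    rw [ha, hb]
    apply max_lt <;> apply lt_min
    · linarith
    · linarith
    · linarith
    · linarith
  have hsub : Set.Ioo a b ⊆ Metric.ball x r ∩ Set.Icc 0 1 := by
    rintro y ⟨h1, h2⟩
    constructor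
    · rw [Real.ball_eq_Ioo]
      constructor
      · exact lt_of_le_of_lt (le_max_left _ _) h1
      · exact lt_of_lt_of_le h2 (min_le_left _ _)
    · constructor
      · exact le_of_lt (lt_of_le_of_lt (le_max_right _ _) h1)
      · exact le_of_lt (lt_of_lt_of_le h2 (min_le_right _ _))
  rw [μ01_apply]
  calc (0:ENNReal) < volume (Set.Ioo a b) := by
        rw [Real.volume_Ioo]; simp [hab, ENNReal.ofReal_pos, sub_pos]
    _ ≤ _ := measure_mono hsub

/-- a.e. inequality between functions continuous on `[0,1]` upgrades to pointwise on `[0,1]`. -/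
lemma ae_le_to_on_Icc {u v : ℝ → ℝ} (hu : ContinuousOn u (Set.Icc 0 1))
    (hv : ContinuousOn v (Set.Icc 0 1)) (h : ∀ᵐ x ∂μ01, u x ≤ v x) :
    ∀ x ∈ Set.Icc (0:ℝ) 1, u x ≤ v x := by
  intro x hx
  by_contra hlt
  push_neg at hlt
  have hc : ContinuousWithinAt (fun y => v y - u y) (Set.Icc 0 1) x :=
    ((hv x hx).sub (hu x hx))
  have hev : ∀ᶠ y in nhdsWithin x (Set.Icc 0 1), v y - u y < 0 := by
    have := hc.eventually_lt_const (by linarith : v x - u x < 0)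
    exact this
  rw [Filter.Eventually, Metric.mem_nhdsWithin_iff] at hev
  obtain ⟨r, hr, hball⟩ := hev
  have hsub : Metric.ball x r ∩ Set.Icc 0 1 ⊆ {y | ¬ u y ≤ v y} := by
    rintro y ⟨hyb, hyI⟩
    have : v y - u y < 0 := hball ⟨hyb, hyI⟩
    simp only [Set.mem_setOf_eq]; linarith
  have h0 : μ01 {y | ¬ u y ≤ v y} = 0 := by
    rw [ae_iff] at h; exact h
  have : μ01 (Metric.ball x r) ≤ μ01 {y | ¬ u y ≤ v y} := by
    rw [μ01_apply, μ01_apply]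
    exact measure_mono (fun y hy => ⟨hsub ⟨hy.1, hy.2⟩, hy.2⟩)
  have := lt_of_lt_of_le (μ01_ball_pos hx hr) this
  rw [h0] at this
  exact lt_irrefl _ this

/-- The set of continuous (on `[0,1]`) a.e. majorants of `g`. -/
def Maj (g : ℝ → ℝ) : Set (ℝ → ℝ) :=
  {u | ContinuousOn u (Set.Icc 0 1) ∧ ∀ᵐ x ∂μ01, g x ≤ u x}

/-- The upper envelope: pointwise infimum of the continuous a.e. majorants. -/
noncomputable def Pfun (g : ℝ → ℝ) (x : ℝ) : ℝ := sInf ((fun u => u x) '' Maj g)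

lemma Maj_congr {f g : ℝ → ℝ} (h : f =ᵐ[μ01] g) : Maj f = Maj g := by
  ext u
  simp only [Maj, Set.mem_setOf_eq, and_congr_right_iff]
  intro _
  constructor <;> intro hh <;> filter_upwards [hh, h] with x hx hfg
  · rwa [← hfg]
  · rwa [hfg]

lemma Pfun_congr {f g : ℝ → ℝ} (h : f =ᵐ[μ01] g) : Pfun f = Pfun g := by
  unfold Pfun; rw [Maj_congr h]

lemma const_mem_Maj {g : ℝ → ℝ} {C : ℝ} (hC : ∀ᵐ x ∂μ01, |g x| ≤ C) :
    (fun _ => C) ∈ Maj g := by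
  refine ⟨continuousOn_const, ?_⟩
  filter_upwards [hC] with x hx using le_trans (le_abs_self _) hx

lemma Maj_mem_lb {g : ℝ → ℝ} {C : ℝ} (hC : ∀ᵐ x ∂μ01, |g x| ≤ C)
    {u : ℝ → ℝ} (hu : u ∈ Maj g) : ∀ x ∈ Set.Icc (0:ℝ) 1, -C ≤ u x := by
  apply ae_le_to_on_Icc continuousOn_const hu.1
  filter_upwards [hC, hu.2] with x h1 h2
  calc -C ≤ g x := neg_le_of_abs_le h1
    _ ≤ u x := h2

lemma Pfun_bddBelow {g : ℝ → ℝ} {C : ℝ} (hC : ∀ᵐ x ∂μ01, |g x| ≤ C)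
    {x : ℝ} (hx : x ∈ Set.Icc (0:ℝ) 1) : BddBelow ((fun u => u x) '' Maj g) := by
  refine ⟨-C, ?_⟩
  rintro y ⟨u, hu, rfl⟩
  exact Maj_mem_lb hC hu x hx

lemma Pfun_le {g : ℝ → ℝ} {C : ℝ} (hC : ∀ᵐ x ∂μ01, |g x| ≤ C)
    {u : ℝ → ℝ} (hu : u ∈ Maj g) {x : ℝ} (hx : x ∈ Set.Icc (0:ℝ) 1) :
    Pfun g x ≤ u x :=
  csInf_le (Pfun_bddBelow hC hx) ⟨u, hu, rfl⟩

lemma le_Pfun {g : ℝ → ℝ} {C : ℝ} (hC : ∀ᵐ x ∂μ01, |g x| ≤ C)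
    {x c : ℝ} (hc : ∀ u ∈ Maj g, c ≤ u x) : c ≤ Pfun g x := by
  apply le_csInf ⟨C, Set.mem_image_of_mem _ (const_mem_Maj hC)⟩
  rintro y ⟨u, hu, rfl⟩; exact hc u hu

lemma Pfun_bounds {g : ℝ → ℝ} {C : ℝ} (hC : ∀ᵐ x ∂μ01, |g x| ≤ C)
    {x : ℝ} (hx : x ∈ Set.Icc (0:ℝ) 1) : |Pfun g x| ≤ C := by
  rw [abs_le]
  constructor
  · exact le_Pfun hC (fun u hu => Maj_mem_lb hC hu x hx)
  · exact Pfun_le hC (const_mem_Maj hC) hx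

/-- Key Lindelöf-type lemma: anything a.e. below every continuous majorant of `g`
is a.e. below the upper envelope of `g`. -/
lemma ae_le_Pfun_of_forall {g k : ℝ → ℝ} {C : ℝ} (hC : ∀ᵐ x ∂μ01, |g x| ≤ C)
    (hk : ∀ u ∈ Maj g, ∀ᵐ x ∂μ01, k x ≤ u x) :
    ∀ᵐ x ∂μ01, k x ≤ Pfun g x := by
  -- countable family of bad sets
  set Z : ℚ × ℚ × ℚ → Set ℝ := fun t =>
    {x | x ∈ Metric.ball (t.2.1 : ℝ) (t.2.2 : ℝ) ∧ (t.1 : ℝ) < k x ∧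
      ∃ u ∈ Maj g, ∀ y ∈ Metric.ball (t.2.1 : ℝ) (t.2.2 : ℝ) ∩ Set.Icc (0:ℝ) 1,
        u y < (t.1 : ℝ)} with hZ
  have hZ0 : ∀ t, μ01 (Z t) = 0 := by
    intro t
    by_cases hw : ∃ u ∈ Maj g, ∀ y ∈ Metric.ball (t.2.1 : ℝ) (t.2.2 : ℝ) ∩ Set.Icc (0:ℝ) 1,
        u y < (t.1 : ℝ)
    · obtain ⟨u, hu, hlt⟩ := hw
      have hae : μ01 {x | ¬ k x ≤ u x} = 0 := by rw [← ae_iff]; exact hk u hu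
      have hsub : Z t ∩ Set.Icc 0 1 ⊆ {x | ¬ k x ≤ u x} ∩ Set.Icc 0 1 := by
        rintro x ⟨⟨hxb, hxk, -⟩, hxI⟩
        refine ⟨?_, hxI⟩
        simp only [Set.mem_setOf_eq]
        push_neg
        exact lt_trans (hlt x ⟨hxb, hxI⟩) hxk
      refine le_antisymm ?_ (zero_le)
      calc μ01 (Z t) = volume (Z t ∩ Set.Icc 0 1) := μ01_apply _
        _ ≤ volume ({x | ¬ k x ≤ u x} ∩ Set.Icc 0 1) := measure_mono hsub
        _ = μ01 {x | ¬ k x ≤ u x} := (μ01_apply _).symm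
        _ = 0 := hae
      
    · have : Z t = ∅ := by
        ext x; simp only [hZ, Set.mem_setOf_eq, Set.mem_empty_iff_false, iff_false]
        rintro ⟨-, -, hw'⟩; exact hw hw'
      rw [this]; simp
  have hZae : ∀ᵐ x ∂μ01, ∀ t, x ∉ Z t := by
    rw [ae_all_iff]
    intro t
    rw [ae_iff]
    simpa using hZ0 t
  filter_upwards [hZae, ae_mem_Icc] with x hxZ hxI
  by_contra hlt
  push_neg at hlt
  -- get a majorant with small value at x
  have hne : ((fun u => u x) '' Maj g).Nonempty :=
    ⟨C, Set.mem_image_of_mem _ (const_mem_Maj hC)⟩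
  obtain ⟨y, ⟨u, hu, rfl⟩, hux⟩ := exists_lt_of_csInf_lt hne hlt
  obtain ⟨c, hc1, hc2⟩ := exists_rat_btwn hux
  -- continuity within Icc gives a ball where u < c
  have hev : ∀ᶠ y in nhdsWithin x (Set.Icc 0 1), u y < (c:ℝ) :=
    (hu.1 x hxI).eventually_lt_const hc1
  rw [Filter.Eventually, Metric.mem_nhdsWithin_iff] at hev
  obtain ⟨ε, hε, hball⟩ := hev
  obtain ⟨q, hq1, hq2⟩ := exists_rat_btwn (by linarith : x - ε/4 < x + ε/4)
  obtain ⟨r, hr1, hr2⟩ := exists_rat_btwn (by linarith : ε/4 < ε/2)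
  have hxq : |x - (q:ℝ)| < ε/4 := by rw [abs_sub_lt_iff]; constructor <;> linarith
  apply hxZ (c, q, r)
  refine ⟨?_, hc2, u, hu, ?_⟩
  · rw [Metric.mem_ball, Real.dist_eq]
    calc |x - (q:ℝ)| < ε/4 := hxq
      _ < r := hr1
  · rintro y ⟨hyb, hyI⟩
    apply hball
    refine ⟨?_, hyI⟩
    rw [Metric.mem_ball, Real.dist_eq] at hyb ⊢
    calc |y - x| ≤ |y - (q:ℝ)| + |(q:ℝ) - x| := abs_sub_le _ _ _
      _ < r + ε/4 := by
          apply add_lt_add hyb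
          rwa [abs_sub_comm]
      _ < ε/2 + ε/4 := by linarith
      _ < ε := by linarith

lemma measurableSet_Pfun_lt {g : ℝ → ℝ} {C : ℝ} (hC : ∀ᵐ x ∂μ01, |g x| ≤ C) (c : ℝ) :
    MeasurableSet {x | x ∈ Set.Icc (0:ℝ) 1 ∧ Pfun g x < c} := by
  have hO : ∀ u : Maj g, ∃ O : Set ℝ, IsOpen O ∧
      (u : ℝ → ℝ) ⁻¹' Set.Iio c ∩ Set.Icc 0 1 = O ∩ Set.Icc 0 1 := by
    intro u
    exact (continuousOn_iff'.1 u.2.1) (Set.Iio c) isOpen_Iio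
  choose O hOopen hOeq using hO
  have key : {x | x ∈ Set.Icc (0:ℝ) 1 ∧ Pfun g x < c} = (⋃ u, O u) ∩ Set.Icc 0 1 := by
    ext x
    simp only [Set.mem_setOf_eq, Set.mem_inter_iff, Set.mem_iUnion]
    constructor
    · rintro ⟨hxI, hlt⟩
      have hne : ((fun u => u x) '' Maj g).Nonempty :=
        ⟨C, Set.mem_image_of_mem _ (const_mem_Maj hC)⟩
      obtain ⟨y, ⟨u, hu, rfl⟩, hux⟩ := exists_lt_of_csInf_lt hne hlt
      refine ⟨⟨⟨u, hu⟩, ?_⟩, hxI⟩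
      have : x ∈ (u ⁻¹' Set.Iio c) ∩ Set.Icc 0 1 := ⟨hux, hxI⟩
      rw [hOeq ⟨u, hu⟩] at this
      exact this.1
    · rintro ⟨⟨u, hu⟩, hxI⟩
      refine ⟨hxI, ?_⟩
      have : x ∈ O u ∩ Set.Icc 0 1 := ⟨hu, hxI⟩
      rw [← hOeq u] at this
      exact lt_of_le_of_lt (Pfun_le hC u.2 hxI) this.1
  rw [key]
  exact ((isOpen_iUnion hOopen).measurableSet).inter measurableSet_Icc

/-- measurable version of the envelope -/
noncomputable def PfunM (g : ℝ → ℝ) : ℝ → ℝ :=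
  (Set.Icc (0:ℝ) 1).piecewise (Pfun g) (fun _ => 0)

lemma PfunM_eq_on {g : ℝ → ℝ} {x : ℝ} (hx : x ∈ Set.Icc (0:ℝ) 1) : PfunM g x = Pfun g x :=
  Set.piecewise_eq_of_mem _ _ _ hx

lemma measurable_PfunM {g : ℝ → ℝ} {C : ℝ} (hC : ∀ᵐ x ∂μ01, |g x| ≤ C) :
    Measurable (PfunM g) := by
  apply measurable_of_Iio
  intro c
  have : PfunM g ⁻¹' Set.Iio c =
      {x | x ∈ Set.Icc (0:ℝ) 1 ∧ Pfun g x < c} ∪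
        ((Set.Icc (0:ℝ) 1)ᶜ ∩ (if (0:ℝ) < c then Set.univ else ∅)) := by
    ext x
    by_cases hx : x ∈ Set.Icc (0:ℝ) 1
    · simp only [Set.mem_preimage, Set.mem_Iio, PfunM, Set.piecewise_eq_of_mem _ _ _ hx,
        Set.mem_union, Set.mem_setOf_eq, Set.mem_inter_iff, Set.mem_compl_iff]
      constructor
      · intro hlt; exact Or.inl ⟨hx, hlt⟩
      · rintro (⟨-, hlt⟩ | ⟨hc, -⟩)
        · exact hlt
        · exact absurd hx hc
    · simp only [Set.mem_preimage, Set.mem_Iio, PfunM, Set.piecewise_eq_of_notMem _ _ _ hx,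
        Set.mem_union, Set.mem_setOf_eq, Set.mem_inter_iff, Set.mem_compl_iff]
      split_ifs with h0
      · simp only [Set.mem_univ, and_true]
        exact ⟨fun _ => Or.inr hx, fun _ => h0⟩
      · simp only [Set.mem_empty_iff_false, and_false, or_false]
        exact ⟨fun hlt => absurd hlt h0, fun ⟨h1, _⟩ => absurd h1 hx⟩
  rw [this]
  apply MeasurableSet.union (measurableSet_Pfun_lt hC c)
  apply (measurableSet_Icc.compl).inter
  split_ifs <;> simp

lemma memLp_PfunM {g : ℝ → ℝ} {C : ℝ} (hC : ∀ᵐ x ∂μ01, |g x| ≤ C) :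
    MemLp (PfunM g) ⊤ μ01 := by
  apply memLp_top_of_bound (measurable_PfunM hC).aestronglyMeasurable (max C 0)
  filter_upwards [ae_mem_Icc] with x hx
  rw [PfunM_eq_on hx, Real.norm_eq_abs]
  exact le_trans (Pfun_bounds hC hx) (le_max_left _ _)


noncomputable def Lpbound (g : Lp ℝ ⊤ μ01) : ℝ := (eLpNormEssSup ⇑g μ01).toReal

lemma ae_abs_le_Lpbound (g : Lp ℝ ⊤ μ01) : ∀ᵐ x ∂μ01, |g x| ≤ Lpbound g := by
  have h1 : eLpNormEssSup ⇑g μ01 < ⊤ := by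
    have := Lp.eLpNorm_lt_top g
    rwa [eLpNorm_exponent_top] at this
  have hae : ∀ᵐ y ∂μ01, (‖(⇑g) y‖₊ : ℝ≥0∞) ≤ eLpNormEssSup ⇑g μ01 := ae_le_eLpNormEssSup
  filter_upwards [hae] with x hx
  have h2 : ((‖(⇑g) x‖₊ : ℝ≥0∞)).toReal ≤ (eLpNormEssSup ⇑g μ01).toReal :=
    ENNReal.toReal_mono h1.ne hx
  simpa [Real.norm_eq_abs, Lpbound] using h2

noncomputable def Penv (g : Lp ℝ ⊤ μ01) : Lp ℝ ⊤ μ01 :=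
  (memLp_PfunM (ae_abs_le_Lpbound g)).toLp _

lemma Penv_coe (g : Lp ℝ ⊤ μ01) : ⇑(Penv g) =ᵐ[μ01] fun x => Pfun ⇑g x := by
  unfold Penv
  filter_upwards [MemLp.coeFn_toLp (memLp_PfunM (ae_abs_le_Lpbound g)), ae_mem_Icc] with x h1 h2
  rw [h1, PfunM_eq_on h2]

lemma le_Penv (g : Lp ℝ ⊤ μ01) : g ≤ Penv g := by
  rw [← Lp.coeFn_le]
  filter_upwards [Penv_coe g,
    ae_le_Pfun_of_forall (ae_abs_le_Lpbound g) (fun u hu => hu.2)] with x h1 h2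
  rw [h1]; exact h2

lemma Penv_nonpos {g : Lp ℝ ⊤ μ01} (hg : g ≤ 0) : Penv g ≤ 0 := by
  rw [← Lp.coeFn_le]
  have h0 : (fun _ => (0:ℝ)) ∈ Maj ⇑g := by
    refine ⟨continuousOn_const, ?_⟩
    rw [← Lp.coeFn_le] at hg
    filter_upwards [hg, Lp.coeFn_zero ℝ ⊤ μ01] with x h1 h2
    exact h1.trans_eq (by simpa using h2)
  filter_upwards [Penv_coe g, ae_mem_Icc, Lp.coeFn_zero ℝ ⊤ μ01] with x h1 h2 h3
  rw [h1, h3]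
  exact Pfun_le (ae_abs_le_Lpbound g) h0 h2

lemma Penv_add_le (g g' : Lp ℝ ⊤ μ01) : Penv (g + g') ≤ Penv g + Penv g' := by
  rw [← Lp.coeFn_le]
  have hcongr : Pfun ⇑(g + g') = Pfun (⇑g + ⇑g') := Pfun_congr (Lp.coeFn_add g g')
  have hCsum : ∀ᵐ x ∂μ01, |(⇑g + ⇑g') x| ≤ Lpbound g + Lpbound g' := by
    filter_upwards [ae_abs_le_Lpbound g, ae_abs_le_Lpbound g'] with x h1 h2
    exact le_trans (abs_add_le _ _) (add_le_add h1 h2)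
  filter_upwards [Penv_coe (g + g'), Penv_coe g, Penv_coe g', Lp.coeFn_add (Penv g) (Penv g'),
    ae_mem_Icc] with x h1 h2 h3 h4 hxI
  rw [h1, h4, Pi.add_apply, h2, h3, hcongr]
  -- now pointwise: Pfun (a+b) x ≤ Pfun a x + Pfun b x
  have step : ∀ u ∈ Maj ⇑g, Pfun (⇑g + ⇑g') x - u x ≤ Pfun ⇑g' x := by
    intro u hu
    apply le_Pfun (ae_abs_le_Lpbound g')
    intro v hv
    rw [sub_le_iff_le_add]
    have huv : u + v ∈ Maj (⇑g + ⇑g') := by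
      refine ⟨hu.1.add hv.1, ?_⟩
      filter_upwards [hu.2, hv.2] with y hy1 hy2 using add_le_add hy1 hy2
    calc Pfun (⇑g + ⇑g') x ≤ (u + v) x := Pfun_le hCsum huv hxI
      _ = v x + u x := by simp [Pi.add_apply]; ring
  have step2 : Pfun (⇑g + ⇑g') x - Pfun ⇑g' x ≤ Pfun ⇑g x := by
    apply le_Pfun (ae_abs_le_Lpbound g)
    intro u hu
    have := step u hu
    linarith
  linarith

lemma Penv_smul {c : ℝ} (hc : 0 < c) (g : Lp ℝ ⊤ μ01) : Penv (c • g) = c • Penv g := by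
  apply Lp.ext
  have hcongr : Pfun ⇑(c • g) = Pfun (c • ⇑g) := Pfun_congr (Lp.coeFn_smul c g)
  have hCc : ∀ᵐ x ∂μ01, |(c • ⇑g) x| ≤ c * Lpbound g := by
    filter_upwards [ae_abs_le_Lpbound g] with x h1
    rw [Pi.smul_apply, smul_eq_mul, abs_mul, abs_of_pos hc]
    exact mul_le_mul_of_nonneg_left h1 (le_of_lt hc)
  filter_upwards [Penv_coe (c • g), Penv_coe g, Lp.coeFn_smul c (Penv g), ae_mem_Icc]
    with x h1 h2 h3 hxI
  rw [h1, h3, Pi.smul_apply, h2, smul_eq_mul, hcongr]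
  -- pointwise: Pfun (c • a) x = c * Pfun a x
  apply le_antisymm
  · have hdiv : Pfun (c • ⇑g) x / c ≤ Pfun ⇑g x := by
      apply le_Pfun (ae_abs_le_Lpbound g)
      intro u hu
      rw [div_le_iff₀ hc]
      have hcu : c • u ∈ Maj (c • ⇑g) := by
        refine ⟨hu.1.const_smul c, ?_⟩
        filter_upwards [hu.2] with y hy
        exact mul_le_mul_of_nonneg_left hy (le_of_lt hc)
      calc Pfun (c • ⇑g) x ≤ (c • u) x := Pfun_le hCc hcu hxI
        _ = c * u x := rfl
        _ = u x * c := mul_comm _ _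
    calc Pfun (c • ⇑g) x = (Pfun (c • ⇑g) x / c) * c := by field_simp
      _ ≤ Pfun ⇑g x * c := mul_le_mul_of_nonneg_right hdiv hc.le
      _ = c * Pfun ⇑g x := mul_comm _ _
  · apply le_Pfun hCc
    intro w hw
    have hcw : c⁻¹ • w ∈ Maj ⇑g := by
      refine ⟨hw.1.const_smul c⁻¹, ?_⟩
      filter_upwards [hw.2] with y hy
      have hy' : c * (⇑g) y ≤ w y := by simpa [smul_eq_mul] using hy
      rw [Pi.smul_apply, smul_eq_mul, le_inv_mul_iff₀ hc]
      exact hy'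
    have hPle : Pfun ⇑g x ≤ c⁻¹ * w x := Pfun_le (ae_abs_le_Lpbound g) hcw hxI
    calc c * Pfun ⇑g x ≤ c * (c⁻¹ * w x) := mul_le_mul_of_nonneg_left hPle hc.le
      _ = w x := by field_simp

lemma Penv_fixes {f : ℝ → ℝ} (hf : ContinuousOn f (Set.Icc 0 1)) {g : Lp ℝ ⊤ μ01}
    (hfg : ⇑g =ᵐ[μ01] f) : Penv g = g := by
  apply Lp.ext
  have hcongr : Pfun ⇑g = Pfun f := Pfun_congr hfg
  filter_upwards [Penv_coe g, ae_mem_Icc, hfg] with x h1 hxI h2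
  rw [h1, hcongr, h2]
  -- Pfun f x = f x on Icc
  apply le_antisymm
  · have hfMaj : f ∈ Maj f := ⟨hf, Eventually.of_forall (fun y => le_refl _)⟩
    obtain ⟨C, hC⟩ := (isCompact_Icc).exists_bound_of_continuousOn hf
    have hCf : ∀ᵐ y ∂μ01, |f y| ≤ C := by
      filter_upwards [ae_mem_Icc] with y hy
      simpa [Real.norm_eq_abs] using hC y hy
    exact Pfun_le hCf hfMaj hxI
  · obtain ⟨C, hC⟩ := (isCompact_Icc).exists_bound_of_continuousOn hf
    have hCf : ∀ᵐ y ∂μ01, |f y| ≤ C := by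
      filter_upwards [ae_mem_Icc] with y hy
      simpa [Real.norm_eq_abs] using hC y hy
    apply le_Pfun hCf
    intro u hu
    exact ae_le_to_on_Icc hf hu.1 hu.2 x hxI

lemma Penv_zero : Penv (0 : Lp ℝ ⊤ μ01) = 0 :=
  Penv_fixes continuousOn_const (by filter_upwards [Lp.coeFn_zero ℝ ⊤ μ01] with x h using h)

/-- pointwise: the lower envelope is below the upper envelope on Icc -/
lemma neg_Pfun_neg_le (g : Lp ℝ ⊤ μ01) {x : ℝ} (hx : x ∈ Set.Icc (0:ℝ) 1) :
    -Pfun (-⇑g) x ≤ Pfun ⇑g x := by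
  have hCn : ∀ᵐ y ∂μ01, |(-⇑g) y| ≤ Lpbound g := by
    filter_upwards [ae_abs_le_Lpbound g] with y h using by simpa using h
  apply le_Pfun (ae_abs_le_Lpbound g)
  intro u hu
  rw [neg_le]
  apply le_Pfun hCn
  intro w hw
  -- -u x ≤ w x  since  0 ≤ u + w  a.e. hence on Icc
  have h0 : ∀ y ∈ Set.Icc (0:ℝ) 1, (0:ℝ) ≤ u y + w y := by
    apply ae_le_to_on_Icc continuousOn_const (hu.1.add hw.1)
    filter_upwards [hu.2, hw.2] with y h1 h2
    have := add_le_add h1 h2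
    simpa using this
  have := h0 x hx
  linarith

namespace LUB

lemma ae_abs_le (g : Lp ℝ ⊤ μ01) : ∀ᵐ x ∂μ01, |g x| ≤ Lpbound g := ae_abs_le_Lpbound g

lemma meas (g : Lp ℝ ⊤ μ01) : Measurable ⇑g :=
  ((g : ℝ →ₘ[μ01] ℝ).stronglyMeasurable).measurable

lemma integ (g : Lp ℝ ⊤ μ01) : Integrable ⇑g μ01 :=
  (Lp.memLp g).integrable le_top

/-- Dedekind completeness of `L^∞([0,1])`. -/
lemma exists_isLUB (S : Set (Lp ℝ ⊤ μ01)) (hne : S.Nonempty) (hbdd : BddAbove S) :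
    ∃ m : Lp ℝ ⊤ μ01, IsLUB S m := by
  classical
  obtain ⟨b, hb⟩ := hbdd
  obtain ⟨s₀, hs₀⟩ := hne
  -- the directed set of finite suprema of S
  set T : Set (Lp ℝ ⊤ μ01) :=
    {x | ∃ (F : Finset (Lp ℝ ⊤ μ01)) (hF : F.Nonempty), ↑F ⊆ S ∧ x = F.sup' hF id} with hT
  have hST : S ⊆ T := by
    intro x hx
    exact ⟨{x}, Finset.singleton_nonempty x, by simpa using hx, by simp⟩
  have hTb : ∀ x ∈ T, x ≤ b := by
    rintro x ⟨F, hF, hFS, rfl⟩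
    apply Finset.sup'_le
    intro y hy
    exact hb (hFS hy)
  have hTsup : ∀ x ∈ T, ∀ y ∈ T, x ⊔ y ∈ T := by
    rintro x ⟨F, hF, hFS, rfl⟩ y ⟨F', hF', hFS', rfl⟩
    refine ⟨F ∪ F', Finset.Nonempty.mono Finset.subset_union_left hF, ?_, ?_⟩
    · intro z hz
      rcases Finset.mem_union.1 (by exact_mod_cast hz) with h | h
      · exact hFS h
      · exact hFS' h
    · rw [Finset.sup'_union hF hF' id]
  -- supremum of integrals
  set I : Lp ℝ ⊤ μ01 → ℝ := fun x => ∫ y, x y ∂μ01 with hI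
  have hImono : ∀ x y : Lp ℝ ⊤ μ01, x ≤ y → I x ≤ I y := by
    intro x y hxy
    apply integral_mono_ae (integ x) (integ y)
    rwa [Lp.coeFn_le]
  have hIbdd : BddAbove (I '' T) := by
    refine ⟨I b, ?_⟩
    rintro r ⟨x, hx, rfl⟩
    exact hImono _ _ (hTb x hx)
  have hITne : (I '' T).Nonempty := ⟨I s₀, Set.mem_image_of_mem _ (hST hs₀)⟩
  set r : ℝ := sSup (I '' T) with hr
  -- choose a maximizing sequence
  have hseq : ∀ n : ℕ, ∃ x ∈ T, r - 1/(n+1) < I x := by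
    intro n
    obtain ⟨y, ⟨x, hx, rfl⟩, hy⟩ := exists_lt_of_lt_csSup hITne
      (by simp only [sub_lt_self_iff]; positivity : r - 1/((n:ℝ)+1) < r)
    exact ⟨x, hx, hy⟩
  choose x hxT hxI using hseq
  -- cumulative suprema
  set t : ℕ → Lp ℝ ⊤ μ01 := fun n => Nat.rec (x 0) (fun k tk => tk ⊔ x (k+1)) n with ht
  have htT : ∀ n, t n ∈ T := by
    intro n
    induction n with
    | zero => exact hxT 0
    | succ k ih => exact hTsup _ ih _ (hxT (k+1))
  have htmono : Monotone t := by
    apply monotone_nat_of_le_succ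
    intro n
    exact le_sup_left
  have hxt : ∀ n, x n ≤ t n := by
    intro n
    cases n with
    | zero => exact le_refl _
    | succ k => exact le_sup_right
  have htb : ∀ n, t n ≤ b := fun n => hTb _ (htT n)
  -- a.e. facts
  have haemono : ∀ᵐ y ∂μ01, ∀ n, (t n) y ≤ (t (n+1)) y := by
    rw [ae_all_iff]
    intro n
    exact (Lp.coeFn_le _ _).2 (htmono (Nat.le_succ n))
  have haeb : ∀ᵐ y ∂μ01, ∀ n, (t n) y ≤ b y := by
    rw [ae_all_iff]
    intro n
    exact (Lp.coeFn_le _ _).2 (htb n)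
  -- the pointwise supremum
  set G : ℝ → ℝ := fun y => ⨆ n, (t n) y with hG
  have hGmeas : Measurable G := Measurable.iSup (fun n => meas (t n))
  have hGmem : MemLp G ⊤ μ01 := by
    apply memLp_top_of_bound hGmeas.aestronglyMeasurable (max (Lpbound b) (Lpbound (t 0)))
    filter_upwards [haeb, ae_abs_le b, ae_abs_le (t 0)] with y h1 h2 h3
    have hbdd : BddAbove (Set.range fun n => (t n) y) := by
      refine ⟨b y, ?_⟩
      rintro z ⟨n, rfl⟩
      exact h1 n
    rw [Real.norm_eq_abs, abs_le]
    constructor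
    · calc -(max (Lpbound b) (Lpbound (t 0))) ≤ -(Lpbound (t 0)) := by
            simp only [neg_le_neg_iff]; exact le_max_right _ _
        _ ≤ (t 0) y := neg_le_of_abs_le h3
        _ ≤ G y := le_ciSup hbdd 0
    · calc G y ≤ b y := ciSup_le h1
        _ ≤ Lpbound b := le_of_abs_le h2
        _ ≤ max (Lpbound b) (Lpbound (t 0)) := le_max_left _ _
  set m : Lp ℝ ⊤ μ01 := hGmem.toLp G with hm
  have hmcoe : ⇑m =ᵐ[μ01] G := MemLp.coeFn_toLp _
  -- pointwise convergence t n y → G y  (a.e.)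
  have haelim : ∀ᵐ y ∂μ01, Tendsto (fun n => (t n) y) atTop (nhds (G y)) := by
    filter_upwards [haemono, haeb] with y h1 h2
    apply tendsto_atTop_ciSup (monotone_nat_of_le_succ h1)
    refine ⟨b y, ?_⟩
    rintro z ⟨n, rfl⟩
    exact h2 n
  -- integral of G is r
  have hItn : ∀ n, r - 1/(n+1) < I (t n) ∧ I (t n) ≤ r := by
    intro n
    constructor
    · exact lt_of_lt_of_le (hxI n) (hImono _ _ (hxt n))
    · exact le_csSup hIbdd (Set.mem_image_of_mem _ (htT n))
  have hdom : ∀ᵐ y ∂μ01, ∀ n, ‖(t n) y‖ ≤ |(t 0) y| + |b y| := by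
    filter_upwards [haemono, haeb] with y h1 h2
    intro n
    have hmon : ∀ k, (t 0) y ≤ (t k) y := by
      intro k
      induction k with
      | zero => exact le_refl _
      | succ j ih => exact le_trans ih (h1 j)
    rw [Real.norm_eq_abs, abs_le]
    constructor
    · calc -(|(t 0) y| + |b y|) ≤ -|(t 0) y| := by simp [abs_nonneg]
        _ ≤ (t 0) y := neg_abs_le _
        _ ≤ (t n) y := hmon n
    · calc (t n) y ≤ b y := h2 n
        _ ≤ |b y| := le_abs_self _
        _ ≤ |(t 0) y| + |b y| := by simp [abs_nonneg]
  have hdomint : Integrable (fun y => |(t 0) y| + |b y|) μ01 :=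
    ((integ (t 0)).abs).add ((integ b).abs)
  have hIG : Tendsto (fun n => I (t n)) atTop (nhds (∫ y, G y ∂μ01)) := by
    exact tendsto_integral_of_dominated_convergence _ (fun n => (integ (t n)).1) hdomint
      (fun n => hdom.mono (fun y hy => hy n)) haelim
  have hIGr : ∫ y, G y ∂μ01 = r := by
    have h1 : Tendsto (fun n : ℕ => r - 1/(n+1)) atTop (nhds r) := by
      have : Tendsto (fun n : ℕ => 1/((n:ℝ)+1)) atTop (nhds 0) := tendsto_one_div_add_atTop_nhds_zero_nat
      have := Tendsto.sub (tendsto_const_nhds (x := r)) this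
      simpa using this
    have h2 : Tendsto (fun n => I (t n)) atTop (nhds r) := by
      apply tendsto_of_tendsto_of_tendsto_of_le_of_le h1 tendsto_const_nhds
      · intro n; exact (hItn n).1.le
      · intro n; exact (hItn n).2
    exact tendsto_nhds_unique hIG h2
  refine ⟨m, ?_, ?_⟩
  · -- upper bound
    intro s hs
    rw [← Lp.coeFn_le]
    -- show ∫ (s ⊔ G) ≤ r = ∫ G
    have hconv : ∀ᵐ y ∂μ01, Tendsto (fun n => max (s y) ((t n) y)) atTop (nhds (max (s y) (G y))) := by
      filter_upwards [haelim] with y hy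
      exact Tendsto.max tendsto_const_nhds hy
    have hdom2 : ∀ᵐ y ∂μ01, ∀ n, ‖max (s y) ((t n) y)‖ ≤ |s y| + (|(t 0) y| + |b y|) := by
      filter_upwards [hdom] with y hy
      intro n
      rw [Real.norm_eq_abs]
      calc |max (s y) ((t n) y)| ≤ max |s y| |(t n) y| := abs_max_le_max_abs_abs
        _ ≤ |s y| + |(t n) y| := by
            apply max_le <;> [simp [abs_nonneg]; simp [abs_nonneg]]
        _ ≤ |s y| + (|(t 0) y| + |b y|) := by
            have := hy n; rw [Real.norm_eq_abs] at this; linarith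
    have hmeasn : ∀ n, AEStronglyMeasurable (fun y => max (s y) ((t n) y)) μ01 :=
      fun n => ((meas s).max (meas (t n))).aestronglyMeasurable
    have hdomint2 : Integrable (fun y => |s y| + (|(t 0) y| + |b y|)) μ01 :=
      ((integ s).abs).add hdomint
    have hconvI : Tendsto (fun n => ∫ y, max (s y) ((t n) y) ∂μ01) atTop
        (nhds (∫ y, max (s y) (G y) ∂μ01)) :=
      tendsto_integral_of_dominated_convergence _ hmeasn hdomint2
        (fun n => hdom2.mono (fun y hy => hy n)) hconv
    have hIle : ∀ n, ∫ y, max (s y) ((t n) y) ∂μ01 ≤ r := by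
      intro n
      have hmem : s ⊔ t n ∈ T := hTsup _ (hST hs) _ (htT n)
      have : ∫ y, max (s y) ((t n) y) ∂μ01 = I (s ⊔ t n) := by
        apply integral_congr_ae
        filter_upwards [Lp.coeFn_sup s (t n)] with y hy
        rw [hy]
        rfl
      rw [this]
      exact le_csSup hIbdd (Set.mem_image_of_mem _ hmem)
    have hlim_le : ∫ y, max (s y) (G y) ∂μ01 ≤ r :=
      le_of_tendsto hconvI (Eventually.of_forall hIle)
    -- therefore ∫ (max (s y) (G y) - G y) ≤ 0 with nonneg integrand
    have hnn : 0 ≤ᵐ[μ01] fun y => max (s y) (G y) - G y := by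
      apply Eventually.of_forall
      intro y
      simp [le_max_right]
    have hint3 : Integrable (fun y => max (s y) (G y) - G y) μ01 := by
      apply Integrable.sub _ (hGmem.integrable le_top)
      apply Integrable.mono' hdomint2 ((meas s).max hGmeas).aestronglyMeasurable
      filter_upwards [haeb, hdom] with y h1 h2
      rw [Real.norm_eq_abs]
      calc |max (s y) (G y)| ≤ max |s y| |G y| := abs_max_le_max_abs_abs
        _ ≤ |s y| + |G y| := by apply max_le <;> simp [abs_nonneg]
        _ ≤ |s y| + (|(t 0) y| + |b y|) := by
            have hGy : |G y| ≤ |(t 0) y| + |b y| := by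
              rw [abs_le]
              have hbdd : BddAbove (Set.range fun n => (t n) y) := by
                refine ⟨b y, ?_⟩; rintro z ⟨n, rfl⟩; exact h1 n
              constructor
              · calc -(|(t 0) y| + |b y|) ≤ -|(t 0) y| := by simp [abs_nonneg]
                  _ ≤ (t 0) y := neg_abs_le _
                  _ ≤ G y := le_ciSup hbdd 0
              · calc G y ≤ b y := ciSup_le h1
                  _ ≤ |b y| := le_abs_self _
                  _ ≤ |(t 0) y| + |b y| := by simp [abs_nonneg]
            linarith
    have hint0 : ∫ y, (max (s y) (G y) - G y) ∂μ01 ≤ 0 := by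
      rw [integral_sub _ (hGmem.integrable le_top)]
      · rw [hIGr] at *
        linarith [hlim_le]
      · apply Integrable.mono' hdomint2 ((meas s).max hGmeas).aestronglyMeasurable
        filter_upwards [haeb, hdom] with y h1 h2
        rw [Real.norm_eq_abs]
        calc |max (s y) (G y)| ≤ max |s y| |G y| := abs_max_le_max_abs_abs
          _ ≤ |s y| + |G y| := by apply max_le <;> simp [abs_nonneg]
          _ ≤ |s y| + (|(t 0) y| + |b y|) := by
              have hGy : |G y| ≤ |(t 0) y| + |b y| := by
                rw [abs_le]
                have hbdd : BddAbove (Set.range fun n => (t n) y) := by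
                  refine ⟨b y, ?_⟩; rintro z ⟨n, rfl⟩; exact h1 n
                constructor
                · calc -(|(t 0) y| + |b y|) ≤ -|(t 0) y| := by simp [abs_nonneg]
                    _ ≤ (t 0) y := neg_abs_le _
                    _ ≤ G y := le_ciSup hbdd 0
                · calc G y ≤ b y := ciSup_le h1
                    _ ≤ |b y| := le_abs_self _
                    _ ≤ |(t 0) y| + |b y| := by simp [abs_nonneg]
              linarith
    have heq0 : (fun y => max (s y) (G y) - G y) =ᵐ[μ01] 0 := by
      have := (integral_eq_zero_iff_of_nonneg_ae hnn hint3).1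
        (le_antisymm hint0 (integral_nonneg_of_ae hnn))
      exact this
    filter_upwards [heq0, hmcoe] with y hy hmy
    rw [hmy]
    have : max (s y) (G y) = G y := by
      have := hy
      simp only [Pi.zero_apply] at this
      linarith
    calc s y ≤ max (s y) (G y) := le_max_left _ _
      _ = G y := this
  · -- least upper bound
    intro v hv
    rw [← Lp.coeFn_le]
    have haev : ∀ᵐ y ∂μ01, ∀ n, (t n) y ≤ v y := by
      rw [ae_all_iff]
      intro n
      refine (Lp.coeFn_le _ _).2 ?_
      rcases htT n with ⟨F, hF, hFS, hEq⟩
      rw [hEq]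
      apply Finset.sup'_le
      intro z hz
      exact hv (hFS hz)
    filter_upwards [haev, hmcoe, haeb] with y h1 hmy h2
    rw [hmy]
    exact ciSup_le h1

end LUB


local notation "Y" => Lp ℝ ⊤ μ01

lemma Lp_smul_le_smul {c : ℝ} (hc : 0 ≤ c) {a b : Y} (hab : a ≤ b) : c • a ≤ c • b := by
  rw [← Lp.coeFn_le]
  have h := (Lp.coeFn_le a b).2 hab
  filter_upwards [Lp.coeFn_smul c a, Lp.coeFn_smul c b, h] with y h1 h2 h3
  rw [h1, h2, Pi.smul_apply, Pi.smul_apply, smul_eq_mul, smul_eq_mul]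
  exact mul_le_mul_of_nonneg_left h3 hc

variable {E : Type*} [AddCommGroup E] [Module ℝ E]

namespace HBK

theorem step (p : E → Y) (hp_add : ∀ x y : E, p (x + y) ≤ p x + p y)
    (hp_smul : ∀ c : ℝ, 0 < c → ∀ x, p (c • x) = c • p x)
    (f : E →ₗ.[ℝ] Y) (hf : ∀ x : f.domain, f x ≤ p x)
    (hdom : f.domain ≠ ⊤) :
    ∃ g, f < g ∧ ∀ x : g.domain, g x ≤ p x := by
  obtain ⟨x, -, hx⟩ : ∃ x ∈ (⊤ : Submodule ℝ E), x ∉ f.domain :=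
    SetLike.exists_of_lt (lt_top_iff_ne_top.2 hdom)
  have key : ∀ v w : f.domain, f v - p ((v : E) - x) ≤ p ((w : E) + x) - f w := by
    intro v w
    rw [sub_le_sub_iff]
    have h2 : f (v + w) ≤ p ((v : E) + (w : E)) := by simpa using hf (v + w)
    have h3 : p ((v : E) + (w : E)) ≤ p ((v : E) - x) + p ((w : E) + x) := by
      have h := hp_add ((v : E) - x) ((w : E) + x)
      have heq : ((v : E) - x) + ((w : E) + x) = (v : E) + (w : E) := by abel
      rwa [heq] at h
    calc f v + f w = f (v + w) := (f.map_add v w).symm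
      _ ≤ p ((v : E) + (w : E)) := h2
      _ ≤ p ((v : E) - x) + p ((w : E) + x) := h3
      _ = p ((w : E) + x) + p ((v : E) - x) := add_comm _ _
  obtain ⟨c, hc⟩ : ∃ c : Y, IsLUB (Set.range fun v : f.domain => f v - p ((v : E) - x)) c := by
    apply LUB.exists_isLUB
    · exact ⟨_, Set.mem_range_self 0⟩
    · refine ⟨p ((0 : f.domain) + x) - f 0, ?_⟩
      rintro z ⟨v, rfl⟩
      exact key v 0
  have le_c : ∀ v : f.domain, f v - p ((v : E) - x) ≤ c := fun v => hc.1 (Set.mem_range_self v)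
  have c_le : ∀ w : f.domain, c ≤ p ((w : E) + x) - f w := by
    intro w
    apply hc.2
    rintro z ⟨v, rfl⟩
    exact key v w
  refine ⟨f.supSpanSingleton x c hx, ?_, ?_⟩
  · refine lt_iff_le_not_ge.2 ⟨f.left_le_sup _ _, fun H => ?_⟩
    replace H := LinearPMap.domain_mono.monotone H
    rw [LinearPMap.domain_supSpanSingleton, sup_le_iff, Submodule.span_le,
      Set.singleton_subset_iff] at H
    exact hx H.2
  · rintro ⟨z, hz⟩
    rcases Submodule.mem_sup.1
      (by rwa [LinearPMap.domain_supSpanSingleton] at hz) with ⟨v, hv, y', hy', rfl⟩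
    rcases Submodule.mem_span_singleton.1 hy' with ⟨t, rfl⟩
    have happ : f.supSpanSingleton x c hx
        ⟨v + t • x, Submodule.mem_sup.2 ⟨v, hv, _, Submodule.mem_span_singleton.2 ⟨t, rfl⟩, rfl⟩⟩ =
        f ⟨v, hv⟩ + t • c := LinearPMap.supSpanSingleton_apply_mk f x c hx v hv t
    rw [show (⟨v + t • x, hz⟩ : (f.supSpanSingleton x c hx).domain) =
      ⟨v + t • x, Submodule.mem_sup.2 ⟨v, hv, _, Submodule.mem_span_singleton.2 ⟨t, rfl⟩, rfl⟩⟩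
      from rfl, happ]
    rcases lt_trichotomy t 0 with ht | ht | ht
    · -- t < 0
      set s : ℝ := -t with hs
      have hs0 : 0 < s := by rw [hs]; linarith
      have hmem := le_c (s⁻¹ • ⟨v, hv⟩)
      have hsmul := Lp_smul_le_smul hs0.le hmem
      rw [smul_sub] at hsmul
      have hfs : s • f (s⁻¹ • (⟨v, hv⟩ : f.domain)) = f ⟨v, hv⟩ := by
        rw [f.map_smul, smul_smul, mul_inv_cancel₀ hs0.ne', one_smul]
      have hcoe : ((s⁻¹ • (⟨v, hv⟩ : f.domain) : f.domain) : E) - x = s⁻¹ • (v + t • x) := by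
        have hst : s⁻¹ * t = -1 := by
          rw [hs, inv_neg, neg_mul, inv_mul_cancel₀ (ne_of_lt ht)]
        rw [SetLike.val_smul, smul_add, smul_smul, hst, neg_one_smul]
        abel
      have hps : s • p (((s⁻¹ • (⟨v, hv⟩ : f.domain) : f.domain) : E) - x) = p (v + t • x) := by
        rw [hcoe, hp_smul s⁻¹ (by positivity), smul_smul, mul_inv_cancel₀ hs0.ne', one_smul]
      rw [hfs, hps] at hsmul
      -- hsmul : f ⟨v,hv⟩ - p (v + t • x) ≤ s • c
      have hts : t • c = -(s • c) := by rw [hs, neg_smul, neg_neg]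
      rw [hts]
      have := sub_le_comm.1 hsmul
      -- this : f ⟨v,hv⟩ - s • c ≤ p (v + t • x)
      calc f ⟨v, hv⟩ + -(s • c) = f ⟨v, hv⟩ - s • c := by abel
        _ ≤ p (v + t • x) := this
    · -- t = 0
      subst ht
      have h0 : v + (0 : ℝ) • x = v := by simp
      show f ⟨v, hv⟩ + (0 : ℝ) • c ≤ p (v + (0 : ℝ) • x)
      rw [h0, zero_smul, add_zero]
      exact hf ⟨v, hv⟩
    · -- 0 < t
      have hmem := c_le (t⁻¹ • ⟨v, hv⟩)
      have hsmul := Lp_smul_le_smul ht.le hmem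
      rw [smul_sub] at hsmul
      have hfs : t • f (t⁻¹ • (⟨v, hv⟩ : f.domain)) = f ⟨v, hv⟩ := by
        rw [f.map_smul, smul_smul, mul_inv_cancel₀ ht.ne', one_smul]
      have hps : t • p (((t⁻¹ • (⟨v, hv⟩ : f.domain) : f.domain) : E) + x) = p (v + t • x) := by
        rw [← hp_smul t ht]
        congr 1
        rw [SetLike.val_smul, smul_add, smul_smul, mul_inv_cancel₀ ht.ne', one_smul]
      rw [hfs, hps] at hsmul
      -- hsmul : t • c ≤ p (v + t • x) - f ⟨v,hv⟩
      exact le_sub_iff_add_le'.1 hsmul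

theorem exists_top (p : E → Y) (hp_add : ∀ x y : E, p (x + y) ≤ p x + p y)
    (hp_smul : ∀ c : ℝ, 0 < c → ∀ x, p (c • x) = c • p x)
    (f : E →ₗ.[ℝ] Y) (hf : ∀ x : f.domain, f x ≤ p x) :
    ∃ q ≥ f, q.domain = ⊤ ∧ ∀ x : q.domain, q x ≤ p x := by
  set S := { g : E →ₗ.[ℝ] Y | ∀ x : g.domain, g x ≤ p x } with hS
  have hSc : ∀ c, c ⊆ S → IsChain (· ≤ ·) c → ∀ y ∈ c, ∃ ub ∈ S, ∀ z ∈ c, z ≤ ub := by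
    intro c hcs c_chain y hy
    have cne : c.Nonempty := ⟨y, hy⟩
    have hcd : DirectedOn (· ≤ ·) c := c_chain.directedOn
    refine ⟨LinearPMap.sSup c hcd, ?_, fun _ => LinearPMap.le_sSup hcd⟩
    rintro ⟨x, hx⟩
    have hdir : DirectedOn (· ≤ ·) (LinearPMap.domain '' c) :=
      directedOn_image.2 (hcd.mono LinearPMap.domain_mono.monotone)
    rcases (Submodule.mem_sSup_of_directed (cne.image _) hdir).1 hx with ⟨_, ⟨g, hgc, rfl⟩, hgx⟩
    have hle : g ≤ LinearPMap.sSup c hcd := LinearPMap.le_sSup _ hgc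
    have hmem := hcs hgc ⟨x, hgx⟩
    have heq : g ⟨x, hgx⟩ = (LinearPMap.sSup c hcd) ⟨x, hx⟩ :=
      hle.2 (show ((⟨x, hgx⟩ : g.domain) : E) =
        ((⟨x, hx⟩ : (LinearPMap.sSup c hcd).domain) : E) from rfl)
    rw [← heq]
    exact hmem
  obtain ⟨q, hfq, hqS, hq⟩ := zorn_le_nonempty₀ S hSc f hf
  refine ⟨q, hfq, ?_, hqS⟩
  contrapose! hq
  rcases step p hp_add hp_smul q hqS hq with ⟨r, hqr, hr⟩
  exact ⟨r, hr, hqr.le, fun hrq => hqr.ne' <| hrq.antisymm hqr.le⟩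

theorem extension (p : E → Y) (hp_add : ∀ x y : E, p (x + y) ≤ p x + p y)
    (hp_smul : ∀ c : ℝ, 0 < c → ∀ x, p (c • x) = c • p x)
    (f : E →ₗ.[ℝ] Y) (hf : ∀ x : f.domain, f x ≤ p x) :
    ∃ g : E →ₗ[ℝ] Y, (∀ x : f.domain, g x = f x) ∧ ∀ x, g x ≤ p x := by
  rcases exists_top p hp_add hp_smul f hf with ⟨⟨g_dom, g⟩, ⟨hdom, hfg⟩, (rfl : g_dom = ⊤), hgp⟩
  refine ⟨g.comp (LinearMap.id.codRestrict ⊤ fun _ => trivial), fun x => ?_, fun x => hgp ⟨x, trivial⟩⟩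
  exact (hfg rfl).symm

end HBK


/-- value of the upper envelope at a continuity point is at most the function value -/
lemma Pfun_le_at_cont {f a : ℝ → ℝ} {C : ℝ} (hb : ∀ y ∈ Set.Icc (0:ℝ) 1, |f y| ≤ C)
    (hfa : a =ᵐ[μ01] f) {x : ℝ} (hx : x ∈ Set.Icc (0:ℝ) 1)
    (hcont : ContinuousWithinAt f (Set.Icc 0 1) x) :
    Pfun a x ≤ f x := by
  have hCa : ∀ᵐ y ∂μ01, |a y| ≤ C := by
    filter_upwards [hfa, ae_mem_Icc] with y h1 h2
    rw [h1]; exact hb y h2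
  apply le_of_forall_pos_le_add
  intro ε hε
  -- find r such that |f y - f x| < ε on the ball
  have hev : ∀ᶠ y in nhdsWithin x (Set.Icc 0 1), f y < f x + ε := by
    apply hcont.eventually_lt_const
    linarith
  rw [Filter.Eventually, Metric.mem_nhdsWithin_iff] at hev
  obtain ⟨r, hr, hball⟩ := hev
  have hC0 : 0 ≤ C := le_trans (abs_nonneg _) (hb x hx)
  -- the cone majorant
  set u : ℝ → ℝ := fun y => f x + ε + (2*C/r) * |y - x| with hu
  have humem : u ∈ Maj a := by
    constructor
    · apply Continuous.continuousOn
      continuity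
    · have hptwise : ∀ y ∈ Set.Icc (0:ℝ) 1, f y ≤ u y := by
        intro y hy
        by_cases hcase : |y - x| < r
        · have : f y < f x + ε := by
            apply hball
            constructor
            · rwa [Metric.mem_ball, Real.dist_eq]
            · exact hy
          have hnn : 0 ≤ (2*C/r) * |y - x| := by positivity
          rw [hu]; dsimp only; linarith
        · push_neg at hcase
          have h2C : 2*C ≤ (2*C/r) * |y - x| := by
            rw [div_mul_eq_mul_div, le_div_iff₀ hr]
            have : 0 ≤ 2*C := by linarith
            calc 2*C*r ≤ 2*C*|y-x| := by
                  apply mul_le_mul_of_nonneg_left hcase this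
              _ = 2*C*|y-x| := rfl
          have hfy : f y ≤ C := le_of_abs_le (hb y hy)
          have hfx : -C ≤ f x := neg_le_of_abs_le (hb x hx)
          rw [hu]; dsimp only; linarith
      filter_upwards [hfa, ae_mem_Icc] with y h1 h2
      rw [h1]
      exact hptwise y h2
  calc Pfun a x ≤ u x := Pfun_le hCa humem hx
    _ = f x + ε := by rw [hu]; dsimp only; simp


/-- if upper and lower envelopes agree at a point of `[0,1]`, the upper envelope is
continuous (within `[0,1]`) there. -/
lemma contWithin_of_envelopes_eq (g : Lp ℝ ⊤ μ01) {x : ℝ} (hx : x ∈ Set.Icc (0:ℝ) 1)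
    (heq : Pfun ⇑g x = -Pfun (-⇑g) x) :
    ContinuousWithinAt (Pfun ⇑g) (Set.Icc 0 1) x := by
  have hCn : ∀ᵐ y ∂μ01, |(-⇑g) y| ≤ Lpbound g := by
    filter_upwards [ae_abs_le_Lpbound g] with y h using by simpa using h
  have hCg := ae_abs_le_Lpbound g
  -- upper semicontinuity of an envelope (generic)
  have usc : ∀ (a : ℝ → ℝ) (Ca : ℝ), (∀ᵐ y ∂μ01, |a y| ≤ Ca) → ∀ c, Pfun a x < c →
      ∀ᶠ y in nhdsWithin x (Set.Icc 0 1), Pfun a y < c := by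
    intro a Ca hCa c hcl
    have hne : ((fun u => u x) '' Maj a).Nonempty :=
      ⟨Ca, Set.mem_image_of_mem _ (const_mem_Maj hCa)⟩
    obtain ⟨z, ⟨u, hu, rfl⟩, huxc⟩ := exists_lt_of_csInf_lt hne hcl
    have hev : ∀ᶠ y in nhdsWithin x (Set.Icc 0 1), u y < c :=
      (hu.1 x hx).eventually_lt_const huxc
    have hmem : ∀ᶠ y in nhdsWithin x (Set.Icc 0 1), y ∈ Set.Icc (0:ℝ) 1 :=
      eventually_mem_nhdsWithin
    filter_upwards [hev, hmem] with y h1 h2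
    exact lt_of_le_of_lt (Pfun_le hCa hu h2) h1
  rw [ContinuousWithinAt]
  rw [tendsto_order]
  constructor
  · -- c < Pfun g x eventually below
    intro c hcl
    -- use lsc of the lower envelope
    have hlow : Pfun (-⇑g) x < -c := by
      rw [heq] at hcl; linarith
    have := usc (-⇑g) (Lpbound g) hCn (-c) hlow
    have hmem : ∀ᶠ y in nhdsWithin x (Set.Icc 0 1), y ∈ Set.Icc (0:ℝ) 1 :=
      eventually_mem_nhdsWithin
    filter_upwards [this, hmem] with y h1 h2
    have := neg_Pfun_neg_le g h2
    linarith
  · intro c hcu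
    exact usc ⇑g (Lpbound g) hCg c hcu

end Aux

/-- An element `h` of the real algebra `L^∞([0,1])` is fixed by every
unital positive linear map of `L^∞([0,1])` fixing (the classes of) all continuous
functions if and only if `h` is the almost-everywhere class of a Riemann integrable
function on `[0,1]`. -/
theorem stmt_19 (h : Lp ℝ ⊤ μ01) :
    (∀ φ : Lp ℝ ⊤ μ01 →ₗ[ℝ] Lp ℝ ⊤ μ01,
        φ oneLinf = oneLinf →
        (∀ g : Lp ℝ ⊤ μ01, (∀ᵐ x ∂μ01, 0 ≤ g x) → (∀ᵐ x ∂μ01, 0 ≤ φ g x)) →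
        (∀ (f : ℝ → ℝ) (g : Lp ℝ ⊤ μ01), ContinuousOn f (Set.Icc (0 : ℝ) 1) →
          (⇑g =ᵐ[μ01] f) → φ g = g) →
        φ h = h) ↔
      ∃ f : ℝ → ℝ, RiemannIntegrableOn01 f ∧ ⇑h =ᵐ[μ01] f := by
  constructor
  · -- forward direction
    intro hyp
    have hsum : ∀ g : Lp ℝ ⊤ μ01, 0 ≤ Penv g + Penv (-g) := by
      intro g
      have hle := Penv_add_le g (-g)
      rw [add_neg_cancel, Penv_zero] at hle
      exact hle
    -- main lemma: any admissible prescribed value must equal h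
    have main : ∀ y₀ : Lp ℝ ⊤ μ01, (∀ t : ℝ, t • y₀ ≤ Penv (t • h)) → y₀ = h := by
      intro y₀ hdom
      have H : ∀ c : ℝ, c • h = 0 → c • y₀ = 0 := by
        intro c hc
        have h1 := hdom c
        rw [hc, Penv_zero] at h1
        have h2 := hdom (-c)
        rw [neg_smul, neg_smul, hc, neg_zero, Penv_zero] at h2
        have h2' : 0 ≤ c • y₀ := neg_nonpos.1 h2
        exact le_antisymm h1 h2'
      set f₀ := LinearPMap.mkSpanSingleton' (σ := RingHom.id ℝ) h y₀ H with hf₀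
      have hf₀dom : ∀ x : f₀.domain, f₀ x ≤ Penv ↑x := by
        rintro ⟨xv, hxv⟩
        obtain ⟨t, rfl⟩ := Submodule.mem_span_singleton.1 hxv
        rw [show f₀ ⟨t • h, hxv⟩ = t • y₀ from LinearPMap.mkSpanSingleton'_apply h y₀ H t hxv]
        exact hdom t
      obtain ⟨φL, hφeq, hφle⟩ :=
        HBK.extension Penv Penv_add_le (fun c hc x => Penv_smul hc x) f₀ hf₀dom
      have hfixφ : ∀ (f : ℝ → ℝ) (g : Lp ℝ ⊤ μ01), ContinuousOn f (Set.Icc (0:ℝ) 1) →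
          (⇑g =ᵐ[μ01] f) → φL g = g := by
        intro f g hf hgf
        have hle1 : φL g ≤ g := by
          have := hφle g
          rwa [Penv_fixes hf hgf] at this
        have hneg : ⇑(-g) =ᵐ[μ01] fun y => -f y := by
          filter_upwards [Lp.coeFn_neg g, hgf] with y h1 h2
          rw [h1, Pi.neg_apply, h2]
        have hle2 : φL (-g) ≤ -g := by
          have := hφle (-g)
          rwa [Penv_fixes hf.neg hneg] at this
        rw [map_neg, neg_le_neg_iff] at hle2
        exact le_antisymm hle1 hle2
      have hposφ : ∀ g : Lp ℝ ⊤ μ01, (∀ᵐ x ∂μ01, 0 ≤ g x) → (∀ᵐ x ∂μ01, 0 ≤ (φL g) x) := by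
        intro g hg
        have hgle : -g ≤ 0 := by
          rw [← Lp.coeFn_le]
          filter_upwards [Lp.coeFn_neg g, hg, Lp.coeFn_zero ℝ ⊤ μ01] with y h1 h2 h3
          rw [h1, h3, Pi.neg_apply, Pi.zero_apply]
          linarith
        have hd := (hφle (-g)).trans (Penv_nonpos hgle)
        rw [map_neg] at hd
        have h0 : 0 ≤ φL g := neg_nonpos.1 hd
        have := (Lp.coeFn_le (0 : Lp ℝ ⊤ μ01) (φL g)).2 h0
        filter_upwards [this, Lp.coeFn_zero ℝ ⊤ μ01] with y h1 h2
        rw [h2] at h1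
        exact h1
      have hunital : φL oneLinf = oneLinf :=
        hfixφ (fun _ => (1:ℝ)) oneLinf continuousOn_const (MemLp.coeFn_toLp _)
      have hfinal := hyp φL hunital hposφ hfixφ
      have hform : φL h = y₀ := by
        have := hφeq ⟨h, Submodule.mem_span_singleton_self h⟩
        rwa [show f₀ ⟨h, Submodule.mem_span_singleton_self h⟩ = y₀ from
          LinearPMap.mkSpanSingleton'_apply_self h y₀ H _] at this
      rw [hform] at hfinal
      exact hfinal
    -- the two admissible values
    have hsc : ∀ (t : ℝ) (g : Lp ℝ ⊤ μ01), 0 < t → 0 ≤ t • (Penv g + Penv (-g)) := by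
      intro t g ht
      have := Lp_smul_le_smul ht.le (hsum g)
      rwa [smul_zero] at this
    have dom1 : ∀ t : ℝ, t • Penv h ≤ Penv (t • h) := by
      intro t
      rcases lt_trichotomy t 0 with ht | ht | ht
      · set s : ℝ := -t with hs
        have hs0 : 0 < s := by rw [hs]; linarith
        have heq : Penv (t • h) = s • Penv (-h) := by
          rw [show t • h = s • (-h) by rw [hs]; simp, Penv_smul hs0]
        have hkey := hsc s h hs0
        rw [smul_add] at hkey
        have : t • Penv h = -(s • Penv h) := by rw [hs]; simp
        rw [this, heq]
        first
        | exact neg_le_iff_add_nonneg.2 hkey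
        | exact neg_le_iff_add_nonneg.2 (by rwa [add_comm] at hkey)
      · subst ht
        rw [zero_smul, zero_smul, Penv_zero]
      · rw [Penv_smul ht]
    have dom2 : ∀ t : ℝ, t • (-Penv (-h)) ≤ Penv (t • h) := by
      intro t
      rcases lt_trichotomy t 0 with ht | ht | ht
      · set s : ℝ := -t with hs
        have hs0 : 0 < s := by rw [hs]; linarith
        have heq : Penv (t • h) = s • Penv (-h) := by
          rw [show t • h = s • (-h) by rw [hs]; simp, Penv_smul hs0]
        rw [heq, show t • (-Penv (-h)) = s • Penv (-h) by rw [hs]; simp]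
      · subst ht
        rw [zero_smul, zero_smul, Penv_zero]
      · have hkey := hsc t h ht
        rw [smul_add] at hkey
        rw [Penv_smul ht, smul_neg]
        first
        | exact neg_le_iff_add_nonneg.2 hkey
        | exact neg_le_iff_add_nonneg.2 (by rwa [add_comm] at hkey)
    have e1 : Penv h = h := main _ dom1
    have e2 : -Penv (-h) = h := main _ dom2
    have e2' : Penv (-h) = -h := neg_eq_iff_eq_neg.1 e2
    -- a.e. identities
    have hN : ⇑h =ᵐ[μ01] fun y => Pfun ⇑h y := by
      have := Penv_coe h
      rw [e1] at this
      exact this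
    have hn : ∀ᵐ y ∂μ01, -(h y) = Pfun (-⇑h) y := by
      have hc := Penv_coe (-h)
      rw [e2'] at hc
      have hPc : Pfun ⇑(-h) = Pfun (-⇑h) := Pfun_congr (Lp.coeFn_neg h)
      filter_upwards [hc, Lp.coeFn_neg h] with y h1 h2
      rw [← hPc, ← h1, h2, Pi.neg_apply]
    have haeq : ∀ᵐ y ∂μ01, Pfun ⇑h y = -Pfun (-⇑h) y := by
      filter_upwards [hN, hn] with y h1 h2
      rw [← h1, ← h2]
      simp
    refine ⟨fun y => Pfun ⇑h y, ⟨⟨Lpbound h, fun x hx => Pfun_bounds (ae_abs_le_Lpbound h) hx⟩, ?_⟩, hN⟩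
    have hsub : {x ∈ Set.Icc (0:ℝ) 1 | ¬ ContinuousWithinAt (fun y => Pfun ⇑h y) (Set.Icc 0 1) x} ⊆
        {y | ¬ (Pfun ⇑h y = -Pfun (-⇑h) y)} ∩ Set.Icc 0 1 := by
      rintro x ⟨hxI, hxd⟩
      refine ⟨?_, hxI⟩
      intro heq
      exact hxd (contWithin_of_envelopes_eq h hxI heq)
    have hD : μ01 {y | ¬ (Pfun ⇑h y = -Pfun (-⇑h) y)} = 0 := ae_iff.1 haeq
    refine le_antisymm ?_ (zero_le)
    calc volume {x ∈ Set.Icc (0:ℝ) 1 | ¬ ContinuousWithinAt (fun y => Pfun ⇑h y) (Set.Icc 0 1) x}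
        ≤ volume ({y | ¬ (Pfun ⇑h y = -Pfun (-⇑h) y)} ∩ Set.Icc 0 1) := measure_mono hsub
      _ = μ01 {y | ¬ (Pfun ⇑h y = -Pfun (-⇑h) y)} := (μ01_apply _).symm
      _ = 0 := hD
  · -- backward direction
    rintro ⟨f, ⟨⟨C, hb⟩, hnull⟩, hae⟩ φ hunital hpos hfix
    apply Lp.ext
    have hCn : ∀ᵐ y ∂μ01, |(-⇑h) y| ≤ Lpbound h := by
      filter_upwards [ae_abs_le_Lpbound h] with y hy using by simpa using hy
    have claim1 : ∀ u ∈ Maj ⇑h, ∀ᵐ y ∂μ01, (φ h) y ≤ u y := by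
      intro u hu
      obtain ⟨Cu, hCu⟩ := isCompact_Icc.exists_bound_of_continuousOn hu.1
      have hmeas : AEStronglyMeasurable u μ01 :=
        (ContinuousOn.aemeasurable hu.1 measurableSet_Icc).aestronglyMeasurable
      have hmem : MemLp u ⊤ μ01 := by
        apply memLp_top_of_bound hmeas Cu
        filter_upwards [ae_mem_Icc] with y hy using hCu y hy
      set U : Lp ℝ ⊤ μ01 := hmem.toLp u with hU
      have hUcoe : ⇑U =ᵐ[μ01] u := MemLp.coeFn_toLp _
      have hfixU : φ U = U := hfix u U hu.1 hUcoe
      have haeUh : ∀ᵐ y ∂μ01, 0 ≤ (U - h) y := by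
        filter_upwards [Lp.coeFn_sub U h, hUcoe, hu.2] with y h1 h2 h3
        rw [h1, Pi.sub_apply, h2]
        linarith
      have := hpos (U - h) haeUh
      have hmap : φ (U - h) = U - φ h := by rw [map_sub, hfixU]
      rw [hmap] at this
      filter_upwards [this, Lp.coeFn_sub U (φ h), hUcoe] with y h1 h2 h3
      rw [h2, Pi.sub_apply, h3] at h1
      linarith
    have h1 : ∀ᵐ y ∂μ01, (φ h) y ≤ Pfun ⇑h y :=
      ae_le_Pfun_of_forall (ae_abs_le_Lpbound h) claim1
    have claim2 : ∀ w ∈ Maj (-⇑h), ∀ᵐ y ∂μ01, -((φ h) y) ≤ w y := by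
      intro w hw
      obtain ⟨Cw, hCw⟩ := isCompact_Icc.exists_bound_of_continuousOn hw.1
      have hmeas : AEStronglyMeasurable w μ01 :=
        (ContinuousOn.aemeasurable hw.1 measurableSet_Icc).aestronglyMeasurable
      have hmem : MemLp w ⊤ μ01 := by
        apply memLp_top_of_bound hmeas Cw
        filter_upwards [ae_mem_Icc] with y hy using hCw y hy
      set W : Lp ℝ ⊤ μ01 := hmem.toLp w with hW
      have hWcoe : ⇑W =ᵐ[μ01] w := MemLp.coeFn_toLp _
      have hfixW : φ W = W := hfix w W hw.1 hWcoe
      have haeWh : ∀ᵐ y ∂μ01, 0 ≤ (W + h) y := by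
        filter_upwards [Lp.coeFn_add W h, hWcoe, hw.2] with y h1 h2 h3
        rw [h1, Pi.add_apply, h2]
        simp only [Pi.neg_apply] at h3
        linarith
      have := hpos (W + h) haeWh
      have hmap : φ (W + h) = W + φ h := by rw [map_add, hfixW]
      rw [hmap] at this
      filter_upwards [this, Lp.coeFn_add W (φ h), hWcoe] with y h1 h2 h3
      rw [h2, Pi.add_apply, h3] at h1
      linarith
    have h2 : ∀ᵐ y ∂μ01, -((φ h) y) ≤ Pfun (-⇑h) y :=
      ae_le_Pfun_of_forall hCn claim2
    -- a.e. continuity of f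
    have hcontae : ∀ᵐ y ∂μ01, ContinuousWithinAt f (Set.Icc 0 1) y := by
      rw [ae_iff]
      have : {y | ¬ ContinuousWithinAt f (Set.Icc 0 1) y} ∩ Set.Icc (0:ℝ) 1 =
          {x ∈ Set.Icc (0:ℝ) 1 | ¬ ContinuousWithinAt f (Set.Icc (0:ℝ) 1) x} := by
        ext y
        simp only [Set.mem_inter_iff, Set.mem_setOf_eq]
        tauto
      rw [μ01_apply, this]
      exact hnull
    have hnegae : (-⇑h) =ᵐ[μ01] fun y => -f y := by
      filter_upwards [hae] with y hy
      rw [Pi.neg_apply, hy]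
    have hnegb : ∀ y ∈ Set.Icc (0:ℝ) 1, |(fun y => -f y) y| ≤ C := by
      intro y hy
      simpa using hb y hy
    have claim3 : ∀ᵐ y ∂μ01, Pfun ⇑h y = f y ∧ Pfun (-⇑h) y = -f y := by
      filter_upwards [hcontae, ae_mem_Icc] with y hcont hyI
      have hNle : Pfun ⇑h y ≤ f y := Pfun_le_at_cont hb hae hyI hcont
      have hnle : Pfun (-⇑h) y ≤ -f y := Pfun_le_at_cont hnegb hnegae hyI hcont.neg
      have hnN : -Pfun (-⇑h) y ≤ Pfun ⇑h y := neg_Pfun_neg_le h hyI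
      constructor <;> linarith
    filter_upwards [h1, h2, claim3, hae] with y hy1 hy2 hy3 hy5
    rw [hy5]
    obtain ⟨hy3a, hy3b⟩ := hy3
    rw [hy3a] at hy1
    rw [hy3b] at hy2
    linarith
end
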